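/- Let M₀, M₁ be i.i.d. uniform on {0,1}, and let n switches with states θ₁,…,θₙ ∈ {0,1} and offsets η_{i,j} ∈ {0,1} produce outputs Z_{i,0} = M_{θᵢ} ⊕ η_{i,0}, Z_{i,1} = M_{1−θᵢ} ⊕ η_{i,1}. Fix a₁,…,aₙ ∈ {0,1}. Then H(M₁ | Z_{1,a₁},…,Z_{n,aₙ}) = 0 if and only if (θ₁,…,θₙ) ≠ (a₁,…,aₙ). -/

import Mathlib

open MeasureTheory ENNReal

/-- Shannon entropy (in nats) of a finitely-valued random variable. -/
noncomputable def ent {Ω α : Type*} [MeasurableSpace Ω] [Fintype α]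
    (μ : Measure Ω) (X : Ω → α) : ℝ :=
  ∑ a : α, Real.negMulLog ((μ (X ⁻¹' {a})).toReal)

/-- Conditional Shannon entropy H(X | Y) = H(X, Y) - H(Y). -/
noncomputable def condEnt {Ω α β : Type*} [MeasurableSpace Ω] [Fintype α] [Fintype β]
    (μ : Measure Ω) (X : Ω → α) (Y : Ω → β) : ℝ :=
  ent μ (fun ω => (X ω, Y ω)) - ent μ Y

lemma ent_comp_inj {Ω α β : Type*} [MeasurableSpace Ω] [Fintype α] [Fintype β]
    (μ : Measure Ω) (X : Ω → α) (f : α → β) (hf : Function.Injective f) :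
    ent μ (fun ω => f (X ω)) = ent μ X := by
  classical
  unfold ent
  calc ∑ b : β, Real.negMulLog ((μ ((fun ω => f (X ω)) ⁻¹' {b})).toReal)
      = ∑ b ∈ Finset.univ.image f,
          Real.negMulLog ((μ ((fun ω => f (X ω)) ⁻¹' {b})).toReal) := by
        refine (Finset.sum_subset (Finset.subset_univ _) ?_).symm
        intro b _ hb
        have hempty : (fun ω => f (X ω)) ⁻¹' {b} = ∅ := by
          ext ω
          simp only [Set.mem_preimage, Set.mem_singleton_iff, Set.mem_empty_iff_false,
            iff_false]
          intro h
          exact hb (Finset.mem_image.2 ⟨X ω, Finset.mem_univ _, h⟩)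
        simp [hempty]
    _ = ∑ a : α, Real.negMulLog ((μ ((fun ω => f (X ω)) ⁻¹' {f a})).toReal) :=
        Finset.sum_image (by intro x _ y _ h; exact hf h)
    _ = ∑ a : α, Real.negMulLog ((μ (X ⁻¹' {a})).toReal) := by
        refine Finset.sum_congr rfl fun a _ => ?_
        have : (fun ω => f (X ω)) ⁻¹' {f a} = X ⁻¹' {a} := by
          ext ω; simp [hf.eq_iff]
        rw [this]

lemma ent_const {Ω α : Type*} [MeasurableSpace Ω] [Fintype α] (μ : Measure Ω)
    [IsProbabilityMeasure μ] (b : α) : ent μ (fun _ => b) = 0 := by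
  classical
  unfold ent
  rw [Finset.sum_eq_single b]
  · have h : (fun _ : Ω => b) ⁻¹' {b} = Set.univ := by ext; simp
    simp [h]
  · intro a _ hab
    have h : (fun _ : Ω => b) ⁻¹' {a} = ∅ := by
      ext ω
      simp only [Set.mem_preimage, Set.mem_singleton_iff, Set.mem_empty_iff_false, iff_false]
      exact fun h => hab h.symm
    simp [h]
  · simp

lemma uniform_pair {Ω : Type*} [MeasurableSpace Ω] (μ : Measure Ω) [IsProbabilityMeasure μ]
    (M₀ M₁ : Ω → ZMod 2)
    (hM : ∀ a b : ZMod 2, μ {ω | M₀ ω = a ∧ M₁ ω = b} = (4 : ℝ≥0∞)⁻¹)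
    (s : Finset (ZMod 2 × ZMod 2)) :
    μ {ω | (M₀ ω, M₁ ω) ∈ s} = (s.card : ℝ≥0∞) * 4⁻¹ := by
  classical
  have hsub : ∀ t : Finset (ZMod 2 × ZMod 2),
      μ {ω | (M₀ ω, M₁ ω) ∈ t} ≤ (t.card : ℝ≥0∞) * 4⁻¹ := by
    intro t
    have hcover : {ω | (M₀ ω, M₁ ω) ∈ t} ⊆
        ⋃ p ∈ t, {ω | M₀ ω = p.1 ∧ M₁ ω = p.2} := by
      intro ω hω
      exact Set.mem_biUnion hω ⟨rfl, rfl⟩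
    calc μ {ω | (M₀ ω, M₁ ω) ∈ t}
        ≤ μ (⋃ p ∈ t, {ω | M₀ ω = p.1 ∧ M₁ ω = p.2}) := measure_mono hcover
      _ ≤ ∑ p ∈ t, μ {ω | M₀ ω = p.1 ∧ M₁ ω = p.2} := measure_biUnion_finset_le _ _
      _ = (t.card : ℝ≥0∞) * 4⁻¹ := by
          rw [Finset.sum_congr rfl fun p _ => hM p.1 p.2, Finset.sum_const, nsmul_eq_mul]
  have h1 := hsub s
  have h2 := hsub sᶜ
  have hc : {ω | (M₀ ω, M₁ ω) ∈ s}ᶜ = {ω | (M₀ ω, M₁ ω) ∈ sᶜ} := by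
    ext ω; simp
  have htot : (1 : ℝ≥0∞) ≤ μ {ω | (M₀ ω, M₁ ω) ∈ s} + μ {ω | (M₀ ω, M₁ ω) ∈ sᶜ} := by
    rw [← hc]
    calc (1 : ℝ≥0∞) = μ Set.univ := measure_univ.symm
      _ = μ ({ω | (M₀ ω, M₁ ω) ∈ s} ∪ {ω | (M₀ ω, M₁ ω) ∈ s}ᶜ) := by
          rw [Set.union_compl_self]
      _ ≤ _ := measure_union_le _ _
  have hcard : (s.card : ℝ≥0∞) * 4⁻¹ + (sᶜ.card : ℝ≥0∞) * 4⁻¹ = 1 := by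
    rw [← add_mul, ← Nat.cast_add, Finset.card_add_card_compl]
    have : (Fintype.card (ZMod 2 × ZMod 2) : ℝ≥0∞) = 4 := by simp
    rw [this]
    exact ENNReal.mul_inv_cancel (by norm_num) (by norm_num)
  refine le_antisymm h1 ?_
  have hne : (sᶜ.card : ℝ≥0∞) * 4⁻¹ ≠ ⊤ :=
    ENNReal.mul_ne_top (ENNReal.natCast_ne_top _) (by simp)
  have : (s.card : ℝ≥0∞) * 4⁻¹ + (sᶜ.card : ℝ≥0∞) * 4⁻¹ ≤
      μ {ω | (M₀ ω, M₁ ω) ∈ s} + (sᶜ.card : ℝ≥0∞) * 4⁻¹ := by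
    rw [hcard]
    exact htot.trans (add_le_add le_rfl h2)
  exact (ENNReal.add_le_add_iff_right hne).1 this

theorem stmt16 {Ω : Type*} [MeasurableSpace Ω] (μ : Measure Ω) [IsProbabilityMeasure μ]
    (n : ℕ) (M₀ M₁ : Ω → ZMod 2)
    (hM : ∀ a b : ZMod 2, μ {ω | M₀ ω = a ∧ M₁ ω = b} = (4 : ℝ≥0∞)⁻¹)
    (θ : Fin n → ZMod 2) (η : Fin n → ZMod 2 → ZMod 2)
    (Z : Fin n → ZMod 2 → Ω → ZMod 2)
    (hZ : ∀ (i : Fin n) (j : ZMod 2) (ω : Ω),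
      Z i j ω = (if θ i + j = 0 then M₀ ω else M₁ ω) + η i j)
    (a : Fin n → ZMod 2) :
    condEnt μ M₁ (fun ω => fun i : Fin n => Z i (a i) ω) = 0 ↔ θ ≠ a := by
  classical
  have hM0 : ∀ m : ZMod 2, μ (M₀ ⁻¹' {m}) = 2⁻¹ := by
    intro m
    have hset : M₀ ⁻¹' {m} = {ω | (M₀ ω, M₁ ω) ∈ Finset.univ.filter fun p => p.1 = m} := by
      ext ω; simp
    have hcardm : ∀ m : ZMod 2, (Finset.univ.filter fun p : ZMod 2 × ZMod 2 => p.1 = m).card = 2 := by decide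
    rw [hset, uniform_pair μ M₀ M₁ hM, hcardm]
    rw [show ((2:ℕ):ℝ≥0∞) = 2 by norm_num, show (4:ℝ≥0∞) = 2*2 by norm_num,
      ENNReal.mul_inv (by norm_num) (by norm_num), ← mul_assoc,
      ENNReal.mul_inv_cancel (by norm_num) (by norm_num), one_mul]
  have hM1 : ∀ m : ZMod 2, μ (M₁ ⁻¹' {m}) = 2⁻¹ := by
    intro m
    have hset : M₁ ⁻¹' {m} = {ω | (M₀ ω, M₁ ω) ∈ Finset.univ.filter fun p => p.2 = m} := by
      ext ω; simp
    have hcardm : ∀ m : ZMod 2, (Finset.univ.filter fun p : ZMod 2 × ZMod 2 => p.2 = m).card = 2 := by decide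
    rw [hset, uniform_pair μ M₀ M₁ hM, hcardm]
    rw [show ((2:ℕ):ℝ≥0∞) = 2 by norm_num, show (4:ℝ≥0∞) = 2*2 by norm_num,
      ENNReal.mul_inv (by norm_num) (by norm_num), ← mul_assoc,
      ENNReal.mul_inv_cancel (by norm_num) (by norm_num), one_mul]
  have hent0 : ent μ M₀ = Real.log 2 := by
    unfold ent
    rw [Finset.sum_congr rfl fun m _ => by rw [hM0 m]]
    rw [Finset.sum_const, Finset.card_univ]
    simp [Real.negMulLog, Real.log_inv]
  have hent1 : ent μ M₁ = Real.log 2 := by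
    unfold ent
    rw [Finset.sum_congr rfl fun m _ => by rw [hM1 m]]
    rw [Finset.sum_const, Finset.card_univ]
    simp [Real.negMulLog, Real.log_inv]
  have hentpair : ent μ (fun ω => (M₁ ω, M₀ ω)) = Real.log 4 := by
    unfold ent
    have hterm : ∀ p : ZMod 2 × ZMod 2,
        (fun ω => (M₁ ω, M₀ ω)) ⁻¹' {p} = {ω | M₀ ω = p.2 ∧ M₁ ω = p.1} := by
      intro p; ext ω; simp [Prod.ext_iff, and_comm]
    rw [Finset.sum_congr rfl fun p _ => by rw [hterm p, hM p.2 p.1]]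
    rw [Finset.sum_const, Finset.card_univ]
    simp [Real.negMulLog, Real.log_inv]
  set Y : Ω → (Fin n → ZMod 2) := fun ω => fun i : Fin n => Z i (a i) ω with hY
  by_cases hθ : θ = a
  · -- all switches match: conditional entropy is log 2 ≠ 0
    have hYeq : ∀ ω, Y ω = fun i => M₀ ω + η i (a i) := by
      intro ω
      funext i
      have h0 : θ i + a i = 0 := by
        rw [congrFun hθ i]
        exact CharTwo.add_self_eq_zero _
      rw [hY]
      simp only [hZ i (a i) ω, if_pos h0]
    have hC : condEnt μ M₁ Y = Real.log 2 := by
      rcases Nat.eq_zero_or_pos n with hn | hn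
      · subst hn
        have hYconst : Y = fun _ => (fun _ : Fin 0 => (0 : ZMod 2)) := by
          funext ω i; exact i.elim0
        have hpair : (fun ω => (M₁ ω, Y ω)) =
            fun ω => ((fun b : ZMod 2 => (b, fun _ : Fin 0 => (0 : ZMod 2))) (M₁ ω)) := by
          funext ω; rw [hYconst]
        have hinj : Function.Injective
            (fun b : ZMod 2 => (b, fun _ : Fin 0 => (0 : ZMod 2))) :=
          fun x y h => congrArg Prod.fst h
        unfold condEnt
        rw [hpair, ent_comp_inj μ M₁ _ hinj, hYconst, ent_const, hent1, sub_zero]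
      · have i0 : Fin n := ⟨0, hn⟩
        set φ : ZMod 2 → (Fin n → ZMod 2) := fun m => fun i => m + η i (a i) with hφ
        have hφinj : Function.Injective φ := by
          intro x y h
          have h' := congrFun h i0
          exact add_right_cancel h'
        have hYφ : Y = fun ω => φ (M₀ ω) := by funext ω; rw [hYeq ω]
        have hinj2 : Function.Injective (fun p : ZMod 2 × ZMod 2 => (p.1, φ p.2)) := by
          intro x y h
          simp only [Prod.mk.injEq] at h
          exact Prod.ext h.1 (hφinj h.2)
        have hpair : (fun ω => (M₁ ω, Y ω)) =
            fun ω => ((fun p : ZMod 2 × ZMod 2 => (p.1, φ p.2)) ((M₁ ω, M₀ ω))) := by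
          funext ω; rw [hYφ]
        have he2 := ent_comp_inj μ (fun ω => (M₁ ω, M₀ ω)) (fun p : ZMod 2 × ZMod 2 => (p.1, φ p.2)) hinj2
        unfold condEnt
        rw [hpair, he2, hentpair, hYφ, ent_comp_inj μ M₀ φ hφinj, hent0]
        rw [show (4:ℝ) = 2*2 by norm_num, Real.log_mul (by norm_num) (by norm_num)]
        ring
    constructor
    · intro h
      rw [hC] at h
      exact absurd h (Real.log_pos (by norm_num)).ne'
    · intro h
      exact absurd hθ h
  · -- some switch differs: M₁ is a function of Y
    obtain ⟨i, hi⟩ := Function.ne_iff.1 hθ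
    have hne0 : θ i + a i ≠ 0 := by
      intro h
      apply hi
      have : ∀ x y : ZMod 2, x + y = 0 → x = y := by decide
      exact this _ _ h
    have hYi : ∀ ω, M₁ ω = Y ω i + η i (a i) := by
      intro ω
      rw [hY]
      simp only [hZ i (a i) ω, if_neg hne0]
      rw [add_assoc, CharTwo.add_self_eq_zero, add_zero]
    have hpair : (fun ω => (M₁ ω, Y ω)) = fun ω => ((fun y : Fin n → ZMod 2 => (y i + η i (a i), y)) (Y ω)) := by
      funext ω
      simp [← hYi ω]
    have hinj : Function.Injective (fun y : Fin n → ZMod 2 => (y i + η i (a i), y)) := by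
      intro x y h
      exact congrArg Prod.snd h
    constructor
    · intro _; exact hθ
    · intro _
      unfold condEnt
      rw [hpair, ent_comp_inj μ Y _ hinj]
      ring
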